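/- Let κ ≤ μ be cardinals with κ regular uncountable and cf μ < κ. Then P_κ μ has no stationary subset of cardinality ≤ μ. -/

import Mathlib

set_option autoImplicit false

open Cardinal Set

/-- `x` has cardinality `< c`. -/
def cardLT (x : Set Ordinal.{0}) (c : Cardinal.{0}) : Prop :=
  Cardinal.mk ↥x < Cardinal.lift.{1, 0} c

/-- `x` has cardinality `≤ c`. -/
def cardLE (x : Set Ordinal.{0}) (c : Cardinal.{0}) : Prop :=
  Cardinal.mk ↥x ≤ Cardinal.lift.{1, 0} c

/-- `x` has cardinality `= c`. -/
def cardEQ (x : Set Ordinal.{0}) (c : Cardinal.{0}) : Prop :=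
  Cardinal.mk ↥x = Cardinal.lift.{1, 0} c

/-- `P_κ Λ`: subsets of `{β | β < Λ}` of size `< κ`. -/
def pkl (κ : Cardinal.{0}) (Λ : Ordinal.{0}) : Set (Set Ordinal.{0}) :=
  {x | x ⊆ Set.Iio Λ ∧ cardLT x κ}

/-- `C` is club in the ground family `X`: cofinal in `(X, ⊆)` and closed under
unions of `⊆`-increasing chains of length `< κ`. -/
def IsClubP (κ : Cardinal.{0}) (X C : Set (Set Ordinal.{0})) : Prop :=
  C ⊆ X ∧ (∀ x ∈ X, ∃ c ∈ C, x ⊆ c) ∧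
  ∀ (δ : Ordinal.{0}) (f : Ordinal.{0} → Set Ordinal.{0}),
    δ ≠ 0 → δ < κ.ord →
    (∀ i j, i ≤ j → j < δ → f i ⊆ f j) →
    (∀ i < δ, f i ∈ C) →
    (⋃ i ∈ Set.Iio δ, f i) ∈ C

/-- `S` is stationary in the ground family `X`: `S ⊆ X` and `S` meets every club. -/
def IsStatP (κ : Cardinal.{0}) (X S : Set (Set Ordinal.{0})) : Prop :=
  S ⊆ X ∧ ∀ C, IsClubP κ X C → (S ∩ C).Nonempty

/-- `C` is closed unbounded in the ordinal `κ`. -/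
def IsClubIn (C : Set Ordinal.{0}) (κ : Ordinal.{0}) : Prop :=
  C ⊆ Set.Iio κ ∧ (∀ α < κ, ∃ β ∈ C, α ≤ β) ∧
  ∀ δ, δ ≠ 0 → δ < κ → (∀ α < δ, ∃ β ∈ C, α < β ∧ β < δ) → δ ∈ C

/-- `S` is stationary in the ordinal `κ`. -/
def IsStatIn (S : Set Ordinal.{0}) (κ : Ordinal.{0}) : Prop :=
  S ⊆ Set.Iio κ ∧ ∀ C, IsClubIn C κ → (S ∩ C).Nonempty

/-- `C(f)`: the members of `P_κ Λ` closed under `f`. -/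
def clubC (κ : Cardinal.{0}) (Λ : Ordinal.{0}) (f : Finset Ordinal.{0} → Set Ordinal.{0}) :
    Set (Set Ordinal.{0}) :=
  {x | x ∈ pkl κ Λ ∧ ∀ a : Finset Ordinal.{0}, ↑a ⊆ x → f a ⊆ x}

/-- The lift of a regular cardinal is regular (in the next universe). -/
lemma isRegular_lift_aux {κ : Cardinal.{0}} (hκ : κ.IsRegular) :
    (Cardinal.lift.{1, 0} κ).IsRegular := by
  constructor
  · exact Cardinal.aleph0_le_lift.2 hκ.1
  · rw [← Cardinal.lift_ord, ← Ordinal.lift_cof]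
    exact Cardinal.lift_le.2 hκ.2

/-- A union of `< κ` many sets of size `< κ` has size `< κ`, for `κ` regular. -/
lemma cardLT_biUnion {κ : Cardinal.{0}} (hκ : κ.IsRegular) {δ : Ordinal.{0}}
    (f : Ordinal.{0} → Set Ordinal.{0}) (hδ : δ < κ.ord)
    (hf : ∀ i < δ, cardLT (f i) κ) : cardLT (⋃ i ∈ Set.Iio δ, f i) κ := by
  have hreg := isRegular_lift_aux hκ
  have h1 : Cardinal.mk ↥(Set.Iio δ) < Cardinal.lift.{1, 0} κ := by
    rw [Ordinal.mk_Iio_ordinal]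
    exact Cardinal.lift_lt.2 (Cardinal.lt_ord.1 hδ)
  refine lt_of_le_of_lt (Cardinal.mk_biUnion_le f (Set.Iio δ)) ?_
  refine Cardinal.mul_lt_of_lt hreg.1 h1 ?_
  exact Cardinal.iSup_lt_of_isRegular hreg h1 fun i => hf i.1 i.2

/-- For `x ∈ P_κ Λ`, the collection `{y ∈ P_κ Λ | x ⊆ y}` is a club. -/
lemma isClubP_above {κ : Cardinal.{0}} {Λ : Ordinal.{0}} (hκ : κ.IsRegular)
    {x : Set Ordinal.{0}} (hx : x ∈ pkl κ Λ) :
    IsClubP κ (pkl κ Λ) {y | y ∈ pkl κ Λ ∧ x ⊆ y} := by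
  refine ⟨fun y hy => hy.1, ?_, ?_⟩
  · intro z hz
    refine ⟨x ∪ z, ⟨⟨union_subset hx.1 hz.1, ?_⟩, subset_union_left⟩, subset_union_right⟩
    exact lt_of_le_of_lt (Cardinal.mk_union_le x z)
      (Cardinal.add_lt_of_lt (Cardinal.aleph0_le_lift.2 hκ.1) hx.2 hz.2)
  · intro δ f hδ0 hδ hmono hC
    have h0 : (0 : Ordinal.{0}) < δ := pos_iff_ne_zero.2 hδ0
    refine ⟨⟨?_, ?_⟩, ?_⟩
    · exact iUnion₂_subset fun i hi => (hC i hi).1.1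
    · exact cardLT_biUnion hκ f hδ fun i hi => (hC i hi).1.2
    · exact (hC 0 h0).2.trans (subset_biUnion_of_mem h0)

/-- If `κ ≤ μ`, `κ` regular uncountable and `cf μ < κ`, then `P_κ μ` has no stationary
subset of cardinality `≤ μ`. -/
theorem no_small_stationary (κ μ : Cardinal.{0})
    (hκ : κ.IsRegular) (hκu : Cardinal.aleph0 < κ)
    (hκμ : κ ≤ μ) (hcof : μ.ord.cof < κ) :
    ¬ ∃ S : Set (Set Ordinal.{0}),
        IsStatP κ (pkl κ μ.ord) S ∧ Cardinal.mk ↥S ≤ Cardinal.lift.{1, 0} μ := by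
  rintro ⟨S, ⟨hSsub, hSstat⟩, hScard⟩
  have hκμ' : κ < μ := by
    rcases lt_or_eq_of_le hκμ with h | h
    · exact h
    · subst h; exact absurd hcof (not_lt.2 hκ.2)
  have hμ0 : Cardinal.aleph0 ≤ μ := hκ.1.trans hκμ
  have hΛlim : Order.IsSuccLimit μ.ord := Cardinal.isSuccLimit_ord hμ0
  have hIio : Cardinal.mk ↥(Set.Iio μ.ord) = Cardinal.lift.{1, 0} μ := by
    rw [Ordinal.mk_Iio_ordinal, Cardinal.card_ord]
  -- stationary implies cofinal
  have hcofinal : ∀ x ∈ pkl κ μ.ord, ∃ y ∈ S, x ⊆ y := by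
    intro x hx
    obtain ⟨y, hyS, hyC⟩ := hSstat _ (isClubP_above hκ hx)
    exact ⟨y, hyS, hyC.2⟩
  -- S is nonempty
  have hempty : (∅ : Set Ordinal.{0}) ∈ pkl κ μ.ord := by
    refine ⟨empty_subset _, ?_⟩
    rw [cardLT, Cardinal.mk_emptyCollection]
    exact lt_of_lt_of_le (by simpa using Cardinal.aleph0_pos) (Cardinal.lift_le.2 hκ.1)
  obtain ⟨s₀, hs₀, -⟩ := hcofinal ∅ hempty
  have hSne : Nonempty ↥S := ⟨⟨s₀, hs₀⟩⟩
  -- enumerate S by Iio μ.ord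
  have hinjS : Nonempty (↥S ↪ ↥(Set.Iio μ.ord)) := by
    rw [← Cardinal.le_def, hIio]; exact hScard
  obtain ⟨j⟩ := hinjS
  have hgsurj : Function.Surjective (Function.invFun j) := Function.invFun_surjective j.injective
  set X : Ordinal.{0} → Set Ordinal.{0} :=
    fun β => if h : β ∈ Set.Iio μ.ord then ((Function.invFun j ⟨β, h⟩ : ↥S) : Set Ordinal.{0})
      else ∅ with hX
  have hXcard : ∀ β, cardLT (X β) κ := by
    intro β
    by_cases h : β ∈ Set.Iio μ.ord
    · rw [hX]; simp only [h, dif_pos]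
      exact (hSsub (Function.invFun j ⟨β, h⟩).2).2
    · rw [hX]; simp only [h, dif_neg, not_false_iff]
      rw [cardLT, Cardinal.mk_emptyCollection]
      exact lt_of_lt_of_le (by simpa using Cardinal.aleph0_pos) (Cardinal.lift_le.2 hκ.1)
  -- diagonalization: avoid all X γ, γ < α
  have havoid : ∀ α < μ.ord, ∃ β < μ.ord, ∀ γ < α, β ∉ X γ := by
    intro α hα
    by_contra h
    push_neg at h
    have hsub : Set.Iio μ.ord ⊆ ⋃ γ ∈ Set.Iio α, X γ := by
      intro β hβ
      obtain ⟨γ, hγ, hβγ⟩ := h β hβ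
      exact Set.mem_biUnion hγ hβγ
    have hle : Cardinal.lift.{1, 0} μ ≤ Cardinal.mk ↥(⋃ γ ∈ Set.Iio α, X γ) := by
      rw [← hIio]; exact Cardinal.mk_le_mk_of_subset hsub
    have hlt : Cardinal.mk ↥(⋃ γ ∈ Set.Iio α, X γ) < Cardinal.lift.{1, 0} μ := by
      have h1 : Cardinal.mk ↥(Set.Iio α) < Cardinal.lift.{1, 0} μ := by
        rw [Ordinal.mk_Iio_ordinal]
        exact Cardinal.lift_lt.2 (Cardinal.lt_ord.1 hα)
      refine lt_of_le_of_lt (Cardinal.mk_biUnion_le X (Set.Iio α)) ?_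
      refine Cardinal.mul_lt_of_lt (Cardinal.aleph0_le_lift.2 hμ0) h1 ?_
      refine lt_of_le_of_lt (ciSup_le' fun γ => (hXcard γ.1).le) ?_
      exact Cardinal.lift_lt.2 hκμ'
    exact absurd hle (not_le.2 hlt)
  -- a cofinal family in μ.ord of size cof μ.ord
  obtain ⟨ι, f, hlsub, hmkι⟩ := Ordinal.exists_lsub_cof μ.ord
  have hfi : ∀ i, f i + 1 < μ.ord := by
    intro i
    have : f i < μ.ord := hlsub ▸ Ordinal.lt_lsub f i
    rw [Ordinal.add_one_eq_succ]; exact hΛlim.succ_lt this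
  -- choose the diagonal set
  choose b hb1 hb2 using fun i : ι => havoid (f i + 1) (hfi i)
  have hy : Set.range b ∈ pkl κ μ.ord := by
    constructor
    · rintro _ ⟨i, rfl⟩; exact hb1 i
    · have hr := Cardinal.mk_range_le_lift (f := b)
      rw [Cardinal.lift_id'.{0, 1}] at hr
      refine lt_of_le_of_lt hr ?_
      rw [hmkι]
      exact Cardinal.lift_lt.2 hcof
  obtain ⟨s, hsS, hys⟩ := hcofinal _ hy
  obtain ⟨⟨β, hβ⟩, hgs⟩ := hgsurj ⟨s, hsS⟩
  have hsX : X β = s := by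
    rw [hX]; simp only [hβ, dif_pos]
    exact congrArg Subtype.val hgs
  obtain ⟨i, hi⟩ := Ordinal.lt_lsub_iff.1 (hlsub ▸ hβ)
  have hβlt : β < f i + 1 := lt_of_le_of_lt hi (lt_add_one _)
  have : b i ∈ X β := hsX ▸ hys (Set.mem_range_self i)
  exact hb2 i β hβlt this
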